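/- Small model property for one-step quantitative fuzzy ALC: if there exists a set X, a valuation τ : V → (X → [0,1]) (|V| = n) and a discrete distribution μ on X satisfying finitely many constraints of the form μ({x | τ(v_i)(x) > a_i}) > p_i and μ({x | τ(v_i)(x) < b_i}) > 1 - p_i for i = 1,…,n, then there is such a model with at most 2n + 1 states. -/
import Mathlib


/-- Small model property for one-step quantitative fuzzy ALC: if the strict
constraints `μ({x | τ i x > a i}) > p i` and `μ({x | τ i x < b i}) > 1 - p i`
are satisfied in some one-step model, they are satisfied in one with at most
`2n + 1` states. -/
theorem stmt15 (n : ℕ) (a b p : Fin n → ℝ)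
    (ha : ∀ i, a i ∈ Set.Icc (0:ℝ) 1) (hb : ∀ i, b i ∈ Set.Icc (0:ℝ) 1)
    (hp : ∀ i, p i ∈ Set.Icc (0:ℝ) 1)
    (X : Type*) (τ : Fin n → X → ℝ) (hτ : ∀ i x, τ i x ∈ Set.Icc (0:ℝ) 1)
    (μ : X → ℝ) (hμ0 : ∀ x, 0 ≤ μ x) (hμs : Summable μ) (hμ1 : ∑' x, μ x = 1)
    (hlow : ∀ i, p i < ∑' x : {x : X | a i < τ i x}, μ x)
    (hhigh : ∀ i, 1 - p i < ∑' x : {x : X | τ i x < b i}, μ x) :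
    ∃ (m : ℕ), m ≤ 2 * n + 1 ∧
      ∃ (σ : Fin n → Fin m → ℝ) (ν : Fin m → ℝ),
        (∀ i y, σ i y ∈ Set.Icc (0:ℝ) 1) ∧ (∀ y, 0 ≤ ν y) ∧ (∑ y, ν y) = 1 ∧
        (∀ i, p i < ∑ y, if a i < σ i y then ν y else 0) ∧
        (∀ i, 1 - p i < ∑ y, if σ i y < b i then ν y else 0) := by
  classical
  -- the ambient vector space and the indicator-vector map
  let e : X → (Fin n → ℝ) × (Fin n → ℝ) := fun x =>
    (fun i => if a i < τ i x then (1:ℝ) else 0, fun i => if τ i x < b i then (1:ℝ) else 0)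
  -- the type map
  let t : X → (Fin n → Bool × Bool) := fun x i => (decide (a i < τ i x), decide (τ i x < b i))
  let m : (Fin n → Bool × Bool) → ℝ := fun c => ∑' x : t ⁻¹' {c}, μ x
  have hμ1' : HasSum μ 1 := hμ1 ▸ hμs.hasSum
  have hmsum : ∑ c, m c = 1 := (hasSum_fintype m).unique (hμ1'.tsum_fiberwise t)
  have hm0 : ∀ c, 0 ≤ m c := fun c => tsum_nonneg (fun x => hμ0 x)
  -- fiberwise computation of the constrained sums
  have key : ∀ (A : Set X), (∀ c : Fin n → Bool × Bool, ∀ x ∈ t ⁻¹' {c}, ∀ x' ∈ t ⁻¹' {c},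
      (x ∈ A ↔ x' ∈ A)) → ∀ c : Fin n → Bool × Bool,
      True := fun _ _ _ => trivial
  have keyA : ∀ i, (∑' x : {x : X | a i < τ i x}, μ x)
      = ∑ c, (if (c i).1 then m c else 0) := by
    intro i
    have h1 : (∑' x : {x : X | a i < τ i x}, μ x)
        = ∑' x, ({x : X | a i < τ i x}).indicator μ x := tsum_subtype _ _
    have hs : Summable (({x : X | a i < τ i x}).indicator μ) := hμs.indicator _
    have h2 := (hs.hasSum.tsum_fiberwise t)
    have h3 : ∀ c, (∑' x : t ⁻¹' {c}, ({x : X | a i < τ i x}).indicator μ x)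
        = if (c i).1 then m c else 0 := by
      intro c
      by_cases hc : (c i).1
      · rw [if_pos hc]
        refine tsum_congr fun x => ?_
        have hx : a i < τ i x.1 := by
          have := x.2
          simp only [Set.mem_preimage, Set.mem_singleton_iff] at this
          have : (t x.1 i).1 = (c i).1 := by rw [this]
          simpa [t, hc] using this
        exact Set.indicator_of_mem (show x.1 ∈ {x : X | a i < τ i x} from hx) μ
      · rw [if_neg hc]
        have : ∀ x : t ⁻¹' {c}, ({x : X | a i < τ i x}).indicator μ x.1 = 0 := by
          intro x
          have hx : ¬ a i < τ i x.1 := by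
            have := x.2
            simp only [Set.mem_preimage, Set.mem_singleton_iff] at this
            have h4 : (t x.1 i).1 = (c i).1 := by rw [this]
            simp only [t, decide_eq_true_eq] at h4
            intro hcon
            exact hc (h4 ▸ by simpa using hcon)
          exact Set.indicator_of_notMem (show x.1 ∉ {x : X | a i < τ i x} from hx) μ
        simp [tsum_congr this]
    rw [h1, ← (hasSum_fintype _).unique h2]
    exact Finset.sum_congr rfl fun c _ => h3 c
  have keyB : ∀ i, (∑' x : {x : X | τ i x < b i}, μ x)
      = ∑ c, (if (c i).2 then m c else 0) := by
    intro i
    have h1 : (∑' x : {x : X | τ i x < b i}, μ x)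
        = ∑' x, ({x : X | τ i x < b i}).indicator μ x := tsum_subtype _ _
    have hs : Summable (({x : X | τ i x < b i}).indicator μ) := hμs.indicator _
    have h2 := (hs.hasSum.tsum_fiberwise t)
    have h3 : ∀ c, (∑' x : t ⁻¹' {c}, ({x : X | τ i x < b i}).indicator μ x)
        = if (c i).2 then m c else 0 := by
      intro c
      by_cases hc : (c i).2
      · rw [if_pos hc]
        refine tsum_congr fun x => ?_
        have hx : τ i x.1 < b i := by
          have := x.2
          simp only [Set.mem_preimage, Set.mem_singleton_iff] at this
          have : (t x.1 i).2 = (c i).2 := by rw [this]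
          simpa [t, hc] using this
        exact Set.indicator_of_mem (show x.1 ∈ {x : X | τ i x < b i} from hx) μ
      · rw [if_neg hc]
        have : ∀ x : t ⁻¹' {c}, ({x : X | τ i x < b i}).indicator μ x.1 = 0 := by
          intro x
          have hx : ¬ τ i x.1 < b i := by
            have := x.2
            simp only [Set.mem_preimage, Set.mem_singleton_iff] at this
            have h4 : (t x.1 i).2 = (c i).2 := by rw [this]
            simp only [t, decide_eq_true_eq] at h4
            intro hcon
            exact hc (h4 ▸ by simpa using hcon)
          exact Set.indicator_of_notMem (show x.1 ∉ {x : X | τ i x < b i} from hx) μ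
        simp [tsum_congr this]
    rw [h1, ← (hasSum_fintype _).unique h2]
    exact Finset.sum_congr rfl fun c _ => h3 c
  -- the target point
  let w : (Fin n → ℝ) × (Fin n → ℝ) :=
    (fun i => ∑' x : {x : X | a i < τ i x}, μ x, fun i => ∑' x : {x : X | τ i x < b i}, μ x)
  -- the idealized points
  let u : (Fin n → Bool × Bool) → (Fin n → ℝ) × (Fin n → ℝ) := fun c =>
    (fun i => if (c i).1 then 1 else 0, fun i => if (c i).2 then 1 else 0)
  let F : Finset (Fin n → Bool × Bool) := Finset.univ.filter (fun c => m c ≠ 0)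
  have hFsum : ∑ c ∈ F, m c = 1 := by
    rw [Finset.sum_filter_ne_zero]; exact hmsum
  have hw : w ∈ convexHull ℝ (Set.range e) := by
    have hz : ∀ c ∈ F, u c ∈ Set.range e := by
      intro c hc
      have hmne : m c ≠ 0 := (Finset.mem_filter.mp hc).2
      have hne : (t ⁻¹' {c}).Nonempty := by
        by_contra hemp
        rw [Set.not_nonempty_iff_eq_empty] at hemp
        apply hmne
        have : IsEmpty (t ⁻¹' {c} : Set X) := by rw [hemp]; exact Set.isEmpty_coe_sort.mpr rfl
        exact tsum_empty
      obtain ⟨x, hx⟩ := hne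
      refine ⟨x, ?_⟩
      have hx' : t x = c := hx
      ext i <;> simp [e, u, ← hx', t]
    have hcm : F.centerMass m u = w := by
      rw [Finset.centerMass_eq_of_sum_1 _ _ hFsum]
      have : ∑ c ∈ F, m c • u c = ∑ c, m c • u c := by
        apply Finset.sum_subset (Finset.subset_univ F)
        intro c _ hc
        have : m c = 0 := by simpa [F] using hc
        simp [this]
      rw [this]
      ext i
      · simp only [Prod.fst_sum, Finset.sum_apply, w]
        rw [keyA i]
        refine Finset.sum_congr rfl fun c _ => ?_
        by_cases hc : (c i).1 <;> simp [u, hc]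
      · simp only [Prod.snd_sum, Finset.sum_apply, w]
        rw [keyB i]
        refine Finset.sum_congr rfl fun c _ => ?_
        by_cases hc : (c i).2 <;> simp [u, hc]
    rw [← hcm]
    exact Finset.centerMass_mem_convexHull F (fun c _ => hm0 c) (hFsum ▸ one_pos) hz
  obtain ⟨ι, hι, z, wt, hzs, hai, hwt0, hwt1, hsum⟩ := eq_pos_convex_span_of_mem_convexHull hw
  have hcard : Fintype.card ι ≤ 2 * n + 1 := by
    have h1 := hai.card_le_finrank_succ
    have h2 : Module.finrank ℝ (vectorSpan ℝ (Set.range z)) ≤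
        Module.finrank ℝ ((Fin n → ℝ) × (Fin n → ℝ)) := Submodule.finrank_le _
    have h3 : Module.finrank ℝ ((Fin n → ℝ) × (Fin n → ℝ)) = 2 * n := by
      simp [Module.finrank_prod, two_mul]
    omega
  -- build the small model
  refine ⟨Fintype.card ι, hcard, ?_⟩
  let ε : Fin (Fintype.card ι) ≃ ι := (Fintype.equivFin ι).symm
  have hxs : ∀ j : ι, ∃ x : X, e x = z j := fun j => hzs ⟨j, rfl⟩
  choose xs hxs using hxs
  refine ⟨fun i y => τ i (xs (ε y)), fun y => wt (ε y), ?_, ?_, ?_, ?_, ?_⟩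
  · intro i y; exact hτ i _
  · intro y; exact (hwt0 (ε y)).le
  · rw [Fintype.sum_equiv ε _ wt (fun y => rfl)]; exact hwt1
  · intro i
    have hz1 : ∀ j : ι, (z j).1 i = if a i < τ i (xs j) then 1 else 0 := by
      intro j; rw [← hxs j]
    have hcoord : (∑ j, wt j • z j).1 i = w.1 i := by rw [hsum]
    have hc2 : (∑ j, wt j • z j).1 i = ∑ j, wt j * (z j).1 i := by
      simp [Prod.fst_sum, Finset.sum_apply]
    have : ∑ y, (if a i < τ i (xs (ε y)) then wt (ε y) else 0)
        = ∑ j, (if a i < τ i (xs j) then wt j else 0) :=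
      Fintype.sum_equiv ε _ _ (fun y => rfl)
    rw [this]
    have : ∑ j, (if a i < τ i (xs j) then wt j else 0) = w.1 i := by
      rw [← hcoord, hc2]
      refine Finset.sum_congr rfl fun j _ => ?_
      rw [hz1 j]
      by_cases h : a i < τ i (xs j) <;> simp [h]
    rw [this]
    exact hlow i
  · intro i
    have hz1 : ∀ j : ι, (z j).2 i = if τ i (xs j) < b i then 1 else 0 := by
      intro j; rw [← hxs j]
    have hcoord : (∑ j, wt j • z j).2 i = w.2 i := by rw [hsum]
    have hc2 : (∑ j, wt j • z j).2 i = ∑ j, wt j * (z j).2 i := by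
      simp [Prod.snd_sum, Finset.sum_apply]
    have : ∑ y, (if τ i (xs (ε y)) < b i then wt (ε y) else 0)
        = ∑ j, (if τ i (xs j) < b i then wt j else 0) :=
      Fintype.sum_equiv ε _ _ (fun y => rfl)
    rw [this]
    have : ∑ j, (if τ i (xs j) < b i then wt j else 0) = w.2 i := by
      rw [← hcoord, hc2]
      refine Finset.sum_congr rfl fun j _ => ?_
      rw [hz1 j]
      by_cases h : τ i (xs j) < b i <;> simp [h]
    rw [this]
    exact hhigh i
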